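/- Let σ and Δ₊ be commuting positive semidefinite Hermitian d×d complex matrices with tr Δ₊ = 1, and suppose σ ≥ x·I for some real x > 0 (i.e. σ − x·I is positive semidefinite). Then for every t ≥ 0, the matrix σ + tΔ₊ is positive definite and tr( Δ₊³ · (σ + tΔ₊)⁻² ) ≤ (x + t)⁻². -/

import Mathlib

open Matrix MeasureTheory
open scoped ComplexOrder

noncomputable section

/-- Logarithm of a matrix: for a Hermitian matrix, apply the real logarithm to the
eigenvalues via the spectral decomposition (functional calculus); junk value `0`
for non-Hermitian matrices. -/
def matLog {d : ℕ} (A : Matrix (Fin d) (Fin d) ℂ) : Matrix (Fin d) (Fin d) ℂ :=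
  if hA : A.IsHermitian then
    (hA.eigenvectorUnitary : Matrix (Fin d) (Fin d) ℂ) *
      Matrix.diagonal (fun i => (Real.log (hA.eigenvalues i) : ℂ)) *
      (star hA.eigenvectorUnitary : Matrix (Fin d) (Fin d) ℂ)
  else 0

/-- The absolute value `|A| = √(AᴴA)` of a matrix. -/
def matAbs {d : ℕ} (A : Matrix (Fin d) (Fin d) ℂ) : Matrix (Fin d) (Fin d) ℂ :=
  ((Matrix.posSemidef_conjTranspose_mul_self A).1.eigenvectorUnitary : Matrix (Fin d) (Fin d) ℂ) *
    Matrix.diagonal ((↑) ∘ Real.sqrt ∘ (Matrix.posSemidef_conjTranspose_mul_self A).1.eigenvalues) *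
    (star (Matrix.posSemidef_conjTranspose_mul_self A).1.eigenvectorUnitary : Matrix (Fin d) (Fin d) ℂ)

/-- The trace norm `‖A‖₁ = tr √(AᴴA)`. -/
def traceNorm {d : ℕ} (A : Matrix (Fin d) (Fin d) ℂ) : ℝ :=
  ((matAbs A).trace).re

/-- The positive part `A₊ = (A + |A|)/2` of a (Hermitian) matrix. -/
def matPos {d : ℕ} (A : Matrix (Fin d) (Fin d) ℂ) : Matrix (Fin d) (Fin d) ℂ :=
  (2⁻¹ : ℂ) • (A + matAbs A)

/-- The negative part `A₋ = (|A| − A)/2` of a (Hermitian) matrix. -/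
def matNeg {d : ℕ} (A : Matrix (Fin d) (Fin d) ℂ) : Matrix (Fin d) (Fin d) ℂ :=
  (2⁻¹ : ℂ) • (matAbs A - A)

/-- The quantum relative entropy `S(ρ‖σ) = tr ρ (log ρ − log σ)`. -/
def relEnt {d : ℕ} (ρ σ : Matrix (Fin d) (Fin d) ℂ) : ℝ :=
  ((ρ * (matLog ρ - matLog σ)).trace).re

/-- Smallest eigenvalue of a Hermitian matrix. -/
def lamMin {d : ℕ} {A : Matrix (Fin d) (Fin d) ℂ} (hA : A.IsHermitian) : ℝ :=
  ⨅ i, hA.eigenvalues i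

/-- The asymmetry function of the binary Kullback–Leibler divergence:
`a(p,t) = (2p+t)·log(1+t/p) + (2(1−p)−t)·log(1−t/(1−p))`. -/
def asym (p t : ℝ) : ℝ :=
  (2 * p + t) * Real.log (1 + t / p) + (2 * (1 - p) - t) * Real.log (1 - t / (1 - p))

section Helpers
variable {n : Type*} [Fintype n] [DecidableEq n]

lemma trace_re_nonneg' {P : Matrix n n ℂ} (hP : P.PosSemidef) : 0 ≤ P.trace.re := by
  have h : ∀ i, 0 ≤ (P i i).re := by
    intro i
    have h2 := hP.dotProduct_mulVec_nonneg (Pi.single i 1)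
    have h3 : star (Pi.single i 1) ⬝ᵥ P *ᵥ (Pi.single i 1 : n → ℂ) = P i i := by
      simp [Matrix.mulVec_single, dotProduct, Pi.single_apply]
    rw [h3] at h2
    simpa using (Complex.le_def.mp h2).1
  calc (0:ℝ) ≤ ∑ i, (P i i).re := Finset.sum_nonneg fun i _ => h i
    _ = P.trace.re := by simp [Matrix.trace, Matrix.diag, Complex.re_sum]

lemma smul_psd' {P : Matrix n n ℂ} (hP : P.PosSemidef) {r : ℝ} (hr : 0 ≤ r) :
    (r • P).PosSemidef := by
  have he : r • P = (r : ℂ) • P := by ext i j; simp [Complex.real_smul]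
  rw [he]
  refine ⟨?_, fun x => ?_⟩
  · rw [Matrix.IsHermitian, Matrix.conjTranspose_smul, hP.1, Complex.star_def,
      Complex.conj_ofReal]
  · exact (hP.smul (a := (r : ℂ)) (by exact_mod_cast hr)).2 x

def Matrix.PosSemidef.sqrt {P : Matrix n n ℂ} (hP : P.PosSemidef) : Matrix n n ℂ :=
  (hP.1.eigenvectorUnitary : Matrix n n ℂ) *
    diagonal ((↑) ∘ Real.sqrt ∘ hP.1.eigenvalues : n → ℂ) *
    star (hP.1.eigenvectorUnitary : Matrix n n ℂ)

lemma Matrix.PosSemidef.sqrt_mul_self {P : Matrix n n ℂ} (hP : P.PosSemidef) :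
    hP.sqrt * hP.sqrt = P := by
  unfold Matrix.PosSemidef.sqrt
  have hU2 : star (hP.1.eigenvectorUnitary : Matrix n n ℂ) * hP.1.eigenvectorUnitary = 1 :=
    Matrix.mem_unitaryGroup_iff'.mp hP.1.eigenvectorUnitary.2
  have hd : diagonal ((↑) ∘ Real.sqrt ∘ hP.1.eigenvalues : n → ℂ) *
      diagonal ((↑) ∘ Real.sqrt ∘ hP.1.eigenvalues : n → ℂ)
      = diagonal ((↑) ∘ hP.1.eigenvalues : n → ℂ) := by
    rw [diagonal_mul_diagonal]
    congr 1
    ext i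
    simp only [Function.comp_apply]
    rw [← Complex.ofReal_mul, Real.mul_self_sqrt (hP.eigenvalues_nonneg i)]
  have hP' : P = (hP.1.eigenvectorUnitary : Matrix n n ℂ) *
      diagonal ((↑) ∘ hP.1.eigenvalues : n → ℂ) * star (hP.1.eigenvectorUnitary : Matrix n n ℂ) :=
    hP.1.spectral_theorem
  conv_rhs => rw [hP']
  simp only [Matrix.mul_assoc]
  rw [← Matrix.mul_assoc (star _) _ (diagonal _ * _), hU2, Matrix.one_mul,
    ← Matrix.mul_assoc (diagonal _) (diagonal _), hd]

lemma Matrix.PosSemidef.posSemidef_sqrt {P : Matrix n n ℂ} (hP : P.PosSemidef) :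
    hP.sqrt.PosSemidef := by
  have hdiag : (diagonal ((↑) ∘ Real.sqrt ∘ hP.1.eigenvalues : n → ℂ)).PosSemidef :=
    Matrix.posSemidef_diagonal_iff.mpr fun i => Complex.zero_le_real.mpr (Real.sqrt_nonneg _)
  have := hdiag.mul_mul_conjTranspose_same (hP.1.eigenvectorUnitary : Matrix n n ℂ)
  rwa [← Matrix.star_eq_conjTranspose] at this

lemma commute_sqrt' {P Q : Matrix n n ℂ} (hP : P.PosSemidef) (h : Commute P Q) :
    Commute hP.sqrt Q := by
  set U : Matrix n n ℂ := (hP.1.eigenvectorUnitary : Matrix n n ℂ) with hUdef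
  set dd : n → ℝ := hP.1.eigenvalues with hdd
  have hU1 : U * star U = 1 := Matrix.mem_unitaryGroup_iff.mp hP.1.eigenvectorUnitary.2
  have hU2 : star U * U = 1 := Matrix.mem_unitaryGroup_iff'.mp hP.1.eigenvectorUnitary.2
  have cancel₁ : ∀ A : Matrix n n ℂ, U * (star U * A) = A := fun A => by
    rw [← Matrix.mul_assoc, hU1, Matrix.one_mul]
  have cancel₂ : ∀ A : Matrix n n ℂ, star U * (U * A) = A := fun A => by
    rw [← Matrix.mul_assoc, hU2, Matrix.one_mul]
  set R : Matrix n n ℂ := star U * Q * U with hRdef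
  have hQR : Q = U * R * star U := by
    rw [hRdef]
    simp only [Matrix.mul_assoc, cancel₁, cancel₂, hU1, hU2, Matrix.mul_one]
  have hP' : P = U * diagonal ((↑) ∘ dd) * star U := hP.1.spectral_theorem
  have key : diagonal ((↑) ∘ dd : n → ℂ) * R = R * diagonal ((↑) ∘ dd) := by
    have h1 : star U * (P * Q) * U = diagonal ((↑) ∘ dd : n → ℂ) * R := by
      rw [hP', hRdef]
      simp only [Matrix.mul_assoc, cancel₁, cancel₂, hU1, hU2, Matrix.mul_one]
    have h2 : star U * (Q * P) * U = R * diagonal ((↑) ∘ dd : n → ℂ) := by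
      rw [hP', hRdef]
      simp only [Matrix.mul_assoc, cancel₁, cancel₂, hU1, hU2, Matrix.mul_one]
    rw [← h1, ← h2, h.eq]
  have key' : diagonal ((↑) ∘ Real.sqrt ∘ dd : n → ℂ) * R
      = R * diagonal ((↑) ∘ Real.sqrt ∘ dd) := by
    ext i j
    simp only [Matrix.diagonal_mul, Matrix.mul_diagonal, Function.comp_apply]
    have hk : (dd i : ℂ) * R i j = R i j * (dd j : ℂ) := by
      have := congrFun (congrFun key i) j
      simpa only [Matrix.diagonal_mul, Matrix.mul_diagonal, Function.comp_apply] using this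
    by_cases hR0 : R i j = 0
    · simp [hR0]
    · have hde : (dd i : ℂ) = dd j := by
        rw [mul_comm (R i j) _] at hk
        exact mul_right_cancel₀ hR0 hk
      have : dd i = dd j := by exact_mod_cast hde
      rw [this, mul_comm]
  have goal : hP.sqrt * Q = Q * hP.sqrt := by
    have hsq : hP.sqrt = U * diagonal ((↑) ∘ Real.sqrt ∘ dd) * star U := rfl
    rw [hsq, hQR]
    simp only [Matrix.mul_assoc, cancel₁, cancel₂, hU1, hU2, Matrix.mul_one]
    rw [← Matrix.mul_assoc (diagonal ((↑) ∘ Real.sqrt ∘ dd)) R (star U), key',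
      Matrix.mul_assoc R]
  exact goal

lemma psd_mul' {P Q : Matrix n n ℂ} (hP : P.PosSemidef) (hQ : Q.PosSemidef)
    (h : Commute P Q) : (P * Q).PosSemidef := by
  have hc : Commute hP.sqrt Q := commute_sqrt' hP h
  have hherm : hP.sqrtᴴ = hP.sqrt := hP.posSemidef_sqrt.1
  have he : P * Q = hP.sqrt * Q * hP.sqrtᴴ := by
    rw [hherm, Matrix.mul_assoc, ← hc.eq, ← Matrix.mul_assoc, hP.sqrt_mul_self]
  rw [he]
  exact hQ.mul_mul_conjTranspose_same _

lemma one_sub_psd' {P : Matrix n n ℂ} (hP : P.PosSemidef) (htr : P.trace = 1) :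
    ((1 : Matrix n n ℂ) - P).PosSemidef := by
  set U : Matrix n n ℂ := (hP.1.eigenvectorUnitary : Matrix n n ℂ) with hUdef
  set dd : n → ℝ := hP.1.eigenvalues with hdd
  have hU1 : U * star U = 1 := Matrix.mem_unitaryGroup_iff.mp hP.1.eigenvectorUnitary.2
  have hU2 : star U * U = 1 := Matrix.mem_unitaryGroup_iff'.mp hP.1.eigenvectorUnitary.2
  have hP' : P = U * diagonal ((↑) ∘ dd) * star U := hP.1.spectral_theorem
  have hsum : ∑ i, dd i = 1 := by
    have h1 : P.trace = ∑ i, (dd i : ℂ) := by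
      rw [hP', Matrix.trace_mul_cycle, hU2, Matrix.one_mul, Matrix.trace_diagonal]
      simp
    rw [htr] at h1
    have : ((∑ i, dd i : ℝ) : ℂ) = ((1:ℝ) : ℂ) := by push_cast; rw [← h1]
    exact_mod_cast this
  have hle : ∀ i, dd i ≤ 1 := by
    intro i
    rw [← hsum]
    exact Finset.single_le_sum (fun j _ => hP.eigenvalues_nonneg j) (Finset.mem_univ i)
  have he : (1 : Matrix n n ℂ) - P = U * diagonal (fun i => 1 - (dd i : ℂ)) * star U := by
    have hd : diagonal (fun i => 1 - (dd i : ℂ))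
        = 1 - diagonal ((↑) ∘ dd : n → ℂ) := by
      rw [← Matrix.diagonal_one, Matrix.diagonal_sub]
      rfl
    rw [hd, Matrix.mul_sub, Matrix.mul_one, Matrix.sub_mul, hU1, ← hP']
  rw [he]
  have hdiag : (diagonal (fun i => 1 - (dd i : ℂ))).PosSemidef := by
    refine Matrix.posSemidef_diagonal_iff.mpr fun i => ?_
    have : (0:ℝ) ≤ 1 - dd i := by linarith [hle i]
    have h2 : ((1 - dd i : ℝ) : ℂ) = 1 - (dd i : ℂ) := by push_cast; ring
    rw [← h2]
    exact_mod_cast this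
  have := hdiag.mul_mul_conjTranspose_same U
  rwa [← Matrix.star_eq_conjTranspose] at this

end Helpers

/-- For commuting positive semidefinite `σ, Δ₊` with `tr Δ₊ = 1` and `σ ≥ xI`, `x > 0`:
for every `t ≥ 0` the matrix `σ + tΔ₊` is positive definite and
`tr(Δ₊³(σ+tΔ₊)⁻²) ≤ (x+t)⁻²`. -/

theorem trace_posPart_cube_le {d : ℕ} (σ Δp : Matrix (Fin d) (Fin d) ℂ)
    (hσ : σ.PosSemidef) (hΔp : Δp.PosSemidef) (hcomm : Commute σ Δp)
    (htr : Δp.trace = 1) (x : ℝ) (hx : 0 < x)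
    (hxσ : (σ - x • (1 : Matrix (Fin d) (Fin d) ℂ)).PosSemidef)
    (t : ℝ) (ht : 0 ≤ t) :
    (σ + t • Δp).PosDef ∧
      ((Δp ^ 3 * ((σ + t • Δp)⁻¹) ^ 2).trace).re ≤ ((x + t) ^ 2)⁻¹ := by
  set c : ℝ := x + t with hc
  have hcpos : 0 < c := by positivity
  set M : Matrix (Fin d) (Fin d) ℂ := σ + t • Δp with hMdef
  -- positivity of M
  have htC : (t • Δp).PosSemidef := smul_psd' hΔp ht
  have hx1 : (x • (1 : Matrix (Fin d) (Fin d) ℂ)).PosDef := by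
    have he : x • (1 : Matrix (Fin d) (Fin d) ℂ) = diagonal (fun _ => (x:ℂ)) := by
      ext i j
      by_cases h : i = j <;>
        simp [h, Matrix.one_apply, Matrix.diagonal_apply, Complex.real_smul]
    rw [he]
    exact Matrix.PosDef.diagonal fun i => by exact_mod_cast hx
  have hMpd : M.PosDef := by
    have he : M = ((σ - x • 1) + t • Δp) + x • 1 := by
      rw [hMdef]; abel
    rw [he]
    exact Matrix.PosDef.posSemidef_add (hxσ.add htC) hx1
  refine ⟨hMpd, ?_⟩
  -- invertibility
  have hdet : IsUnit M.det := hMpd.isUnit.map (Matrix.detMonoidHom)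
  have hMM : M * M⁻¹ = 1 := Matrix.mul_nonsing_inv M hdet
  have hMM' : M⁻¹ * M = 1 := Matrix.nonsing_inv_mul M hdet
  -- commutation facts
  have hσC : Commute σ Δp := hcomm
  have hMC : Commute M Δp := (hσC.add_left ((Commute.refl Δp).smul_left t))
  have hMσ : Commute M σ := ((Commute.refl σ).add_left (hσC.symm.smul_left t))
  have hinv : ∀ A : Matrix (Fin d) (Fin d) ℂ, Commute M A → Commute M⁻¹ A := by
    intro A hA
    have : M⁻¹ * A = A * M⁻¹ := by
      calc M⁻¹ * A = M⁻¹ * A * (M * M⁻¹) := by rw [hMM, Matrix.mul_one]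
        _ = M⁻¹ * (A * M) * M⁻¹ := by simp only [Matrix.mul_assoc]
        _ = M⁻¹ * (M * A) * M⁻¹ := by rw [hA.symm.eq]
        _ = (M⁻¹ * M) * (A * M⁻¹) := by simp only [Matrix.mul_assoc]
        _ = A * M⁻¹ := by rw [hMM', Matrix.one_mul]
    exact this
  have hMiC : Commute M⁻¹ Δp := hinv _ hMC
  have hMiσ : Commute M⁻¹ σ := hinv _ hMσ
  have hMiM : Commute M⁻¹ M := hinv _ (Commute.refl M)
  -- the matrices
  set E : Matrix (Fin d) (Fin d) ℂ := M + c • Δp with hEdef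
  set D : Matrix (Fin d) (Fin d) ℂ := σ - x • Δp with hDdef
  have hDM : D = M - c • Δp := by
    rw [hDdef, hMdef, hc, add_smul]; abel
  -- PSD facts
  have hE : E.PosSemidef := hMpd.posSemidef.add (smul_psd' hΔp hcpos.le)
  have hD : D.PosSemidef := by
    have he : D = (σ - x • 1) + x • ((1 : Matrix (Fin d) (Fin d) ℂ) - Δp) := by
      rw [hDdef, smul_sub]; abel
    rw [he]
    exact hxσ.add (smul_psd' (one_sub_psd' hΔp htr) hx.le)
  have hMi : (M⁻¹).PosSemidef := hMpd.inv.posSemidef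
  have hMi2 : ((M⁻¹) ^ 2).PosSemidef := hMi.pow 2
  -- commutes among pieces
  have hCE : Commute Δp E := (hMC.symm.add_right ((Commute.refl Δp).smul_right c))
  have hCEMi2 : Commute (Δp * E) ((M⁻¹) ^ 2) :=
    ((hMiC.symm.mul_left (hMiM.symm.add_left (hMiC.symm.smul_left c))).pow_right 2)
  have hCD : Commute Δp D := (hσC.symm.sub_right ((Commute.refl Δp).smul_right x))
  have hED : Commute E D :=
    ((hMσ.sub_right (hMC.smul_right x)).add_left
      ((hCD.smul_left c)))
  have hMiD : Commute M⁻¹ D := hMiσ.sub_right (hMiC.smul_right x)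
  have hFD : Commute ((Δp * E) * (M⁻¹) ^ 2) D :=
    (hCD.mul_left hED).mul_left (hMiD.pow_left 2)
  -- the PSD matrix F
  set F : Matrix (Fin d) (Fin d) ℂ := ((Δp * E) * (M⁻¹) ^ 2) * D with hFdef
  have hF : F.PosSemidef :=
    psd_mul' (psd_mul' (psd_mul' hΔp hE hCE) hMi2 hCEMi2) hD hFD
  -- key identity
  have hEDprod : E * D = M * M - (c * c) • (Δp * Δp) := by
    rw [hEdef, hDM, Matrix.add_mul, Matrix.mul_sub, Matrix.mul_sub,
      Matrix.mul_smul, Matrix.smul_mul, Matrix.smul_mul, Matrix.mul_smul,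
      hMC.eq, smul_smul]
    abel
  have hMMinv : (M * M) * (M⁻¹ * M⁻¹) = 1 := by
    calc (M * M) * (M⁻¹ * M⁻¹) = M * ((M * M⁻¹) * M⁻¹) := by
          simp only [Matrix.mul_assoc]
      _ = 1 := by rw [hMM, Matrix.one_mul, hMM]
  have hkey : F = Δp - (c * c) • (Δp ^ 3 * (M⁻¹) ^ 2) := by
    have h1 : F = Δp * (E * D) * ((M⁻¹) ^ 2) := by
      rw [hFdef, Matrix.mul_assoc (Δp * E), (hMiD.pow_left 2).eq]
      simp only [Matrix.mul_assoc]
    have h2 : Δp * (M * M) * ((M⁻¹) ^ 2) = Δp := by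
      rw [pow_two, Matrix.mul_assoc, hMMinv, Matrix.mul_one]
    have h3 : Δp * (Δp * Δp) = Δp ^ 3 := by rw [pow_succ', pow_two]
    rw [h1, hEDprod, Matrix.mul_sub, Matrix.sub_mul, Matrix.mul_smul, Matrix.smul_mul,
      h2, ← Matrix.mul_assoc, Matrix.mul_assoc Δp Δp Δp, h3]
  have hcc : (c * c : ℝ) ≠ 0 := by positivity
  have hX : Δp ^ 3 * (M⁻¹) ^ 2 = (c * c)⁻¹ • (Δp - F) := by
    rw [hkey, sub_sub_cancel, smul_smul, inv_mul_cancel₀ hcc, one_smul]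
  rw [hX, Matrix.trace_smul, Matrix.trace_sub, htr]
  have hre : (((c * c)⁻¹ : ℝ) • ((1 : ℂ) - F.trace)).re
      = (c * c)⁻¹ * (1 - F.trace.re) := by
    rw [Complex.real_smul]
    simp [Complex.mul_re]
  rw [hre]
  have hFtr : 0 ≤ F.trace.re := trace_re_nonneg' hF
  have h2 : ((x + t) ^ 2 : ℝ)⁻¹ = (c * c)⁻¹ := by rw [hc, sq]
  rw [h2]
  have hpos : (0:ℝ) < (c * c)⁻¹ := by positivity
  nlinarith
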